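/- Let (Ω,𝒜,μ) be a σ-finite infinite measure space and let T be a Dunford–Schwartz operator on (Ω,μ). For f ∈ R_μ let P(f) denote the almost uniform limit of the Cesàro averages M_n(T)(f). Then for every f ∈ R_μ, ‖M_n(T)(f) − P(f)‖_{L¹+L^∞} → 0 as n → ∞. -/

import Mathlib

open MeasureTheory Filter Set
open scoped ENNReal NNReal Topology

variable {Ω : Type*} [MeasurableSpace Ω]

/-- Membership in `L¹(μ) + L^∞(μ)`: `f = g + h` with `g ∈ L¹`, `h ∈ L^∞`. -/
def MemL1PlusLinf (μ : Measure Ω) (f : Ω → ℝ) : Prop :=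
  ∃ g h : Ω → ℝ, MemLp g 1 μ ∧ MemLp h ⊤ μ ∧ f = g + h

/-- Membership in `R_μ = {f ∈ L¹+L^∞ : μ{|f| > λ} < ∞ for all λ > 0}`. -/
def MemRmu (μ : Measure Ω) (f : Ω → ℝ) : Prop :=
  MemL1PlusLinf μ f ∧ ∀ l : ℝ, 0 < l → μ {x | l < |f x|} < ⊤

/-- Membership in `L⁰_μ = {f : μ{|f| > λ} < ∞ for some λ > 0}`. -/
def MemL0mu (μ : Measure Ω) (f : Ω → ℝ) : Prop :=
  ∃ l : ℝ, 0 < l ∧ μ {x | l < |f x|} < ⊤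

/-- Almost uniform convergence of a sequence of functions. -/
def TendstoAU (μ : Measure Ω) (F : ℕ → Ω → ℝ) (f : Ω → ℝ) : Prop :=
  ∀ ε : ℝ, 0 < ε → ∃ E : Set Ω, MeasurableSet E ∧ μ Eᶜ ≤ ENNReal.ofReal ε ∧
    Tendsto (fun n => eLpNorm (E.indicator (f - F n)) ⊤ μ) atTop (𝓝 0)

/-- Dunford-Schwartz operator (at the level of measurable representatives):
a linear, measurability-preserving operator which is a contraction in both the
`L¹`- and the `L^∞`-norm. -/
def IsDS (μ : Measure Ω) (T : (Ω → ℝ) → Ω → ℝ) : Prop :=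
  (∀ f g : Ω → ℝ, T (f + g) = T f + T g) ∧
  (∀ (c : ℝ) (f : Ω → ℝ), T (c • f) = c • T f) ∧
  (∀ f : Ω → ℝ, Measurable f → Measurable (T f)) ∧
  (∀ f : Ω → ℝ, MemLp f 1 μ → eLpNorm (T f) 1 μ ≤ eLpNorm f 1 μ) ∧
  (∀ f : Ω → ℝ, MemLp f ⊤ μ → eLpNorm (T f) ⊤ μ ≤ eLpNorm f ⊤ μ)

/-- Cesàro averages `M_n(T)(f) = (1/n) ∑_{k=0}^{n-1} T^k f`. -/
noncomputable def cesaro (T : (Ω → ℝ) → Ω → ℝ) (n : ℕ) (f : Ω → ℝ) : Ω → ℝ :=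
  fun x => (∑ k ∈ Finset.range n, T^[k] f x) / n

/-- The norm of `L¹(μ) + L^∞(μ)`:
`‖f‖ = inf{‖g‖₁ + ‖h‖_∞ : f = g + h, g ∈ L¹, h ∈ L^∞}`. -/
noncomputable def normL1PlusLinf (μ : Measure Ω) (f : Ω → ℝ) : ℝ≥0∞ :=
  ⨅ (g : Ω → ℝ) (h : Ω → ℝ) (_ : MemLp g 1 μ) (_ : MemLp h ⊤ μ) (_ : f = g + h),
    eLpNorm g 1 μ + eLpNorm h ⊤ μ


section AuxST15
variable {μ : Measure Ω} {T : (Ω → ℝ) → Ω → ℝ} {f g : Ω → ℝ}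

omit [MeasurableSpace Ω] in
private lemma iter_add15 (hadd : ∀ f g : Ω → ℝ, T (f + g) = T f + T g) (k : ℕ) (f g : Ω → ℝ) :
    T^[k] (f + g) = T^[k] f + T^[k] g := by
  induction k with
  | zero => simp
  | succ k ih =>
      rw [Function.iterate_succ_apply', Function.iterate_succ_apply',
        Function.iterate_succ_apply', ih, hadd]

omit [MeasurableSpace Ω] in
private lemma cesaro_add15 (hadd : ∀ f g : Ω → ℝ, T (f + g) = T f + T g) (n : ℕ) (f g : Ω → ℝ) :
    cesaro T n (f + g) = cesaro T n f + cesaro T n g := by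
  funext x
  simp only [cesaro, iter_add15 hadd, Pi.add_apply]
  rw [Finset.sum_add_distrib, add_div]

private lemma iter_meas15 (hm : ∀ f : Ω → ℝ, Measurable f → Measurable (T f))
    (hf : Measurable f) (k : ℕ) : Measurable (T^[k] f) := by
  induction k with
  | zero => simpa using hf
  | succ k ih => rw [Function.iterate_succ_apply']; exact hm _ ih

private lemma cesaro_meas15 (hm : ∀ f : Ω → ℝ, Measurable f → Measurable (T f))
    (hf : Measurable f) (n : ℕ) : Measurable (cesaro T n f) := by
  apply Measurable.div _ measurable_const
  exact Finset.measurable_sum _ fun k _ => iter_meas15 hm hf k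

omit [MeasurableSpace Ω] in
private lemma cesaro_eq_smul15 (n : ℕ) (f : Ω → ℝ) :
    cesaro T n f = ((n : ℝ))⁻¹ • ∑ k ∈ Finset.range n, T^[k] f := by
  funext x
  simp [cesaro, div_eq_inv_mul, Finset.sum_apply]

private lemma cesaro_eLpNorm_le15 {p : ℝ≥0∞} (hp : 1 ≤ p)
    (hm : ∀ f : Ω → ℝ, Measurable f → Measurable (T f))
    (hf : Measurable f)
    (hb : ∀ k, eLpNorm (T^[k] f) p μ ≤ eLpNorm f p μ) (n : ℕ) :
    eLpNorm (cesaro T (n + 1) f) p μ ≤ eLpNorm f p μ := by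
  rw [cesaro_eq_smul15, eLpNorm_const_smul]
  have h1 : eLpNorm (∑ k ∈ Finset.range (n + 1), T^[k] f) p μ
      ≤ ∑ k ∈ Finset.range (n + 1), eLpNorm (T^[k] f) p μ :=
    eLpNorm_sum_le (fun k _ => (iter_meas15 hm hf k).aestronglyMeasurable) hp
  have h2 : ∑ k ∈ Finset.range (n + 1), eLpNorm (T^[k] f) p μ
      ≤ ((n + 1 : ℕ) : ℝ≥0∞) * eLpNorm f p μ := by
    calc ∑ k ∈ Finset.range (n + 1), eLpNorm (T^[k] f) p μ
        ≤ (Finset.range (n + 1)).card • eLpNorm f p μ :=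
          Finset.sum_le_card_nsmul _ _ _ fun k _ => hb k
      _ = ((n + 1 : ℕ) : ℝ≥0∞) * eLpNorm f p μ := by
          simp [nsmul_eq_mul]
  have hnorm : (‖((n + 1 : ℕ) : ℝ)⁻¹‖₊ : ℝ≥0∞) = (((n + 1 : ℕ) : ℝ≥0∞))⁻¹ := by
    rw [nnnorm_inv, Real.nnnorm_natCast, ENNReal.coe_inv (by exact_mod_cast Nat.succ_ne_zero n)]
    simp
  calc (‖((n + 1 : ℕ) : ℝ)⁻¹‖₊ : ℝ≥0∞) * eLpNorm (∑ k ∈ Finset.range (n + 1), T^[k] f) p μ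
      ≤ (((n + 1 : ℕ) : ℝ≥0∞))⁻¹ * (((n + 1 : ℕ) : ℝ≥0∞) * eLpNorm f p μ) := by
        rw [hnorm]; exact mul_le_mul_right (h1.trans h2) _
    _ = eLpNorm f p μ := by
        rw [← mul_assoc, ENNReal.inv_mul_cancel (by exact_mod_cast Nat.succ_ne_zero n)
          (by simp), one_mul]

private lemma iter_L115 (hm : ∀ f : Ω → ℝ, Measurable f → Measurable (T f))
    (hc : ∀ f : Ω → ℝ, MemLp f 1 μ → eLpNorm (T f) 1 μ ≤ eLpNorm f 1 μ)
    (hf : Measurable f) (hface : MemLp f 1 μ) (k : ℕ) :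
    eLpNorm (T^[k] f) 1 μ ≤ eLpNorm f 1 μ := by
  induction k with
  | zero => simp
  | succ k ih =>
      rw [Function.iterate_succ_apply']
      exact (hc _ ⟨(iter_meas15 hm hf k).aestronglyMeasurable,
        lt_of_le_of_lt ih hface.2⟩).trans ih

private lemma iter_Linf15 (hm : ∀ f : Ω → ℝ, Measurable f → Measurable (T f))
    (hc : ∀ f : Ω → ℝ, MemLp f ⊤ μ → eLpNorm (T f) ⊤ μ ≤ eLpNorm f ⊤ μ)
    (hf : Measurable f) (hface : MemLp f ⊤ μ) (k : ℕ) :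
    eLpNorm (T^[k] f) ⊤ μ ≤ eLpNorm f ⊤ μ := by
  induction k with
  | zero => simp
  | succ k ih =>
      rw [Function.iterate_succ_apply']
      exact (hc _ ⟨(iter_meas15 hm hf k).aestronglyMeasurable,
        lt_of_le_of_lt ih hface.2⟩).trans ih

private lemma normL1PlusLinf_le15 {u g h : Ω → ℝ} (hg : MemLp g 1 μ) (hh : MemLp h ⊤ μ)
    (hu : u = g + h) :
    normL1PlusLinf μ u ≤ eLpNorm g 1 μ + eLpNorm h ⊤ μ := by
  refine iInf_le_of_le g (iInf_le_of_le h (iInf_le_of_le hg (iInf_le_of_le hh ?_)))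
  exact iInf_le _ hu

private lemma tendstoAU_ae15 {F : ℕ → Ω → ℝ} {Pf : Ω → ℝ} (hP : TendstoAU μ F Pf) :
    ∀ᵐ x ∂μ, Tendsto (fun n => F n x) atTop (𝓝 (Pf x)) := by
  choose E hEm hEμ hEt using fun k : ℕ => hP (1 / (k + 1)) (by positivity)
  set N : Set Ω := ⋂ k, (E k)ᶜ with hN
  have hNzero : μ N = 0 := by
    have hle : ∀ k : ℕ, μ N ≤ ENNReal.ofReal (1 / (k + 1)) := fun k =>
      (measure_mono (Set.iInter_subset _ k)).trans (hEμ k)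
    have htend : Tendsto (fun k : ℕ => ENNReal.ofReal (1 / (k + 1))) atTop (𝓝 0) := by
      rw [← ENNReal.ofReal_zero]
      apply ENNReal.tendsto_ofReal
      exact tendsto_one_div_add_atTop_nhds_zero_nat
    exact le_antisymm (ge_of_tendsto' htend hle) zero_le
  have hbound : ∀ k n : ℕ, ∀ᵐ x ∂μ,
      (‖(E k).indicator (Pf - F n) x‖₊ : ℝ≥0∞)
        ≤ eLpNorm ((E k).indicator (Pf - F n)) ⊤ μ := by
    intro k n
    simpa [eLpNorm_exponent_top, enorm_eq_nnnorm] using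
      (ae_le_eLpNormEssSup (f := (E k).indicator (Pf - F n)) (μ := μ))
  have hae : ∀ᵐ x ∂μ, ∀ k n : ℕ,
      (‖(E k).indicator (Pf - F n) x‖₊ : ℝ≥0∞)
        ≤ eLpNorm ((E k).indicator (Pf - F n)) ⊤ μ :=
    ae_all_iff.2 fun k => ae_all_iff.2 fun n => hbound k n
  have hNae : ∀ᵐ x ∂μ, x ∉ N := measure_eq_zero_iff_ae_notMem.1 hNzero
  filter_upwards [hae, hNae] with x hx hxN
  obtain ⟨k, hk⟩ : ∃ k, x ∈ E k := by
    by_contra hcon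
    push_neg at hcon
    exact hxN (Set.mem_iInter.2 fun k => hcon k)
  have hsq : Tendsto (fun n => (‖Pf x - F n x‖₊ : ℝ≥0∞)) atTop (𝓝 0) := by
    apply tendsto_of_tendsto_of_tendsto_of_le_of_le tendsto_const_nhds (hEt k)
    · exact fun n => zero_le
    · intro n
      have := hx k n
      rwa [Set.indicator_of_mem hk] at this
  have hsq' : Tendsto (fun n => ‖Pf x - F n x‖₊) atTop (𝓝 0) := by
    rw [← ENNReal.coe_zero] at hsq
    exact ENNReal.tendsto_coe.1 hsq
  have hsq'' : Tendsto (fun n => ‖F n x - Pf x‖) atTop (𝓝 0) := by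
    have h0 := (NNReal.tendsto_coe (x := 0)).2 hsq'
    simp only [NNReal.coe_zero, coe_nnnorm] at h0
    simpa [norm_sub_rev] using h0
  exact tendsto_iff_norm_sub_tendsto_zero.2 hsq''

private lemma trunc_small15 {a : Ω → ℝ} (ham : Measurable a) (hm : MemLp a 1 μ) {δ : ℝ}
    (hδ : 0 < δ) :
    ∃ K : ℝ, 0 < K ∧
      eLpNorm (fun x => if K < |a x| then a x else 0) 1 μ ≤ ENNReal.ofReal δ := by
  set G : ℕ → Ω → ℝ≥0∞ := fun n x => if (n : ℝ) < |a x| then (‖a x‖₊ : ℝ≥0∞) else 0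
    with hG
  have hGmeas : ∀ n : ℕ, Measurable (G n) := by
    intro n
    apply Measurable.ite _ (ham.enorm) measurable_const
    exact measurableSet_lt measurable_const ham.abs
  have hGle : ∀ n, G n ≤ᶠ[ae μ] fun x => (‖a x‖₊ : ℝ≥0∞) := by
    intro n
    refine Filter.Eventually.of_forall fun x => ?_
    by_cases h : (n : ℝ) < |a x| <;> simp [hG, h]
  have hbd : ∫⁻ x, (‖a x‖₊ : ℝ≥0∞) ∂μ ≠ ⊤ := by
    simp only [← enorm_eq_nnnorm]; rw [← eLpNorm_one_eq_lintegral_enorm]; exact hm.2.ne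
  have hptw : ∀ᵐ x ∂μ, Tendsto (fun n => G n x) atTop (𝓝 0) := by
    refine Filter.Eventually.of_forall fun x => ?_
    have : ∀ᶠ n : ℕ in atTop, G n x = 0 := by
      obtain ⟨n₀, hn₀⟩ := exists_nat_ge (|a x|)
      filter_upwards [eventually_ge_atTop n₀] with n hn
      have : ¬ ((n : ℝ) < |a x|) := not_lt.2 (hn₀.trans (by exact_mod_cast hn))
      simp [hG, this]
    exact Tendsto.congr' (Filter.EventuallyEq.symm this) tendsto_const_nhds
  have htend : Tendsto (fun n => ∫⁻ x, G n x ∂μ) atTop (𝓝 0) := by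
    have := tendsto_lintegral_of_dominated_convergence _ hGmeas hGle hbd hptw
    simpa using this
  obtain ⟨n₁, hn₁⟩ := ENNReal.tendsto_atTop_zero.1 htend (ENNReal.ofReal δ)
    (by simpa using hδ)
  refine ⟨(n₁ : ℝ) + 1, by positivity, ?_⟩
  have hle : eLpNorm (fun x => if (n₁ : ℝ) + 1 < |a x| then a x else 0) 1 μ
      ≤ ∫⁻ x, G n₁ x ∂μ := by
    rw [eLpNorm_one_eq_lintegral_enorm]
    apply lintegral_mono
    intro x
    by_cases h : (n₁ : ℝ) + 1 < |a x|
    · have h' : (n₁ : ℝ) < |a x| := by linarith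
      simp [hG, h, h']
    · simp [h, hG]
  exact hle.trans (hn₁ n₁ le_rfl)

private lemma clamp_abs15 {fx ax bx C : ℝ} (hC : 0 ≤ C) (hb : |bx| ≤ C) (hf : fx = ax + bx) :
    |fx - max (min fx C) (-C)| ≤ |ax| := by
  rcases abs_le.1 hb with ⟨h1, h2⟩
  have ha1 := le_abs_self ax
  have ha2 := neg_abs_le ax
  rcases le_total fx C with hfC | hfC
  · rcases le_total (-C) fx with hCf | hCf
    · rw [min_eq_left hfC, max_eq_left hCf]
      simpa using abs_nonneg ax
    · rw [min_eq_left hfC, max_eq_right hCf, abs_le]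
      constructor <;> nlinarith
  · rw [min_eq_right hfC, max_eq_left (by linarith), abs_le]
    constructor <;> nlinarith

private lemma setLintegral_top_bound15 {v : Ω → ℝ} {c : ℝ≥0∞} {s : Set Ω}
    (hv : eLpNorm v ⊤ μ ≤ c) : ∫⁻ x in s, (‖v x‖₊ : ℝ≥0∞) ∂μ ≤ c * μ s := by
  have hae : ∀ᵐ x ∂(μ.restrict s), (‖v x‖₊ : ℝ≥0∞) ≤ c := by
    refine ae_restrict_of_ae ?_
    filter_upwards [ae_le_eLpNormEssSup (f := v) (μ := μ)] with x hx
    exact hx.trans (by rwa [← eLpNorm_exponent_top])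
  calc ∫⁻ x in s, (‖v x‖₊ : ℝ≥0∞) ∂μ ≤ ∫⁻ _ in s, c ∂μ := lintegral_mono_ae hae
    _ = c * μ s := by rw [setLIntegral_const]

end AuxST15

/-- mean ergodic theorem in `(R_μ, ‖·‖_{L¹+L^∞})`: if `P(f)` is the a.u.
limit of the Cesàro averages `M_n(T)(f)` of `f ∈ R_μ`, then
`‖M_n(T)(f) − P(f)‖_{L¹+L^∞} → 0`. -/
theorem stmt15 (μ : Measure Ω) [SigmaFinite μ] (hμ : μ Set.univ = ⊤)
    (T : (Ω → ℝ) → Ω → ℝ) (hT : IsDS μ T)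
    (f : Ω → ℝ) (hf : Measurable f) (hfR : MemRmu μ f) (Pf : Ω → ℝ)
    (hP : TendstoAU μ (fun n => cesaro T (n + 1) f) Pf) :
    Tendsto (fun n => normL1PlusLinf μ (cesaro T (n + 1) f - Pf)) atTop (𝓝 0) := by
  obtain ⟨⟨a, b, ha1, hb1, hab⟩, -⟩ := hfR
  obtain ⟨hadd, hsmul, hmeasT, hL1c, hLinfc⟩ := hT
  -- the essential bound of `b`
  set Cr : ℝ := (eLpNorm b ⊤ μ).toReal with hCrdef
  have hCr0 : 0 ≤ Cr := ENNReal.toReal_nonneg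
  have hbae : ∀ᵐ x ∂μ, |b x| ≤ Cr := by
    filter_upwards [ae_le_eLpNormEssSup (f := b) (μ := μ)] with x hx
    have hfin : eLpNormEssSup b μ ≠ ⊤ := by
      rw [← eLpNorm_exponent_top]; exact hb1.2.ne
    have := ENNReal.toReal_mono hfin hx
    simpa [hCrdef, eLpNorm_exponent_top] using this
  -- the bounded part of `f`
  set h : Ω → ℝ := fun x => max (min (f x) Cr) (-Cr) with hhdef
  have hhm : Measurable h := (hf.min measurable_const).max measurable_const
  have hhbd : ∀ x, ‖h x‖ ≤ Cr := by
    intro x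
    rw [Real.norm_eq_abs, abs_le]
    refine ⟨le_max_right _ _, max_le (min_le_right _ _) (by linarith)⟩
  have hhtop : eLpNorm h ⊤ μ ≤ ENNReal.ofReal Cr := by
    rw [eLpNorm_exponent_top]
    exact eLpNormEssSup_le_of_ae_bound (Filter.Eventually.of_forall hhbd)
  have hhmem : MemLp h ⊤ μ :=
    ⟨hhm.aestronglyMeasurable, lt_of_le_of_lt hhtop ENNReal.ofReal_lt_top⟩
  -- the integrable part of `f`
  set a' : Ω → ℝ := f - h with ha'def
  have ha'm : Measurable a' := hf.sub hhm
  have ha'le : ∀ᵐ x ∂μ, |a' x| ≤ |a x| := by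
    filter_upwards [hbae] with x hx
    have hfx : f x = a x + b x := by rw [hab]; rfl
    exact clamp_abs15 hCr0 hx hfx
  have ha'mem : MemLp a' 1 μ := by
    refine ⟨ha'm.aestronglyMeasurable, ?_⟩
    rw [eLpNorm_one_eq_lintegral_enorm]
    have hle : ∫⁻ x, (‖a' x‖₊ : ℝ≥0∞) ∂μ ≤ ∫⁻ x, (‖a x‖₊ : ℝ≥0∞) ∂μ := by
      refine lintegral_mono_ae ?_
      filter_upwards [ha'le] with x hx
      refine ENNReal.coe_le_coe.2 ?_
      rw [← NNReal.coe_le_coe, coe_nnnorm, coe_nnnorm, Real.norm_eq_abs, Real.norm_eq_abs]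
      exact hx
    refine lt_of_le_of_lt hle ?_
    simp only [← enorm_eq_nnnorm]; rw [← eLpNorm_one_eq_lintegral_enorm]
    exact ha1.2
  -- a.e. convergence of the averages and a.e.-measurability of the limit
  have haet : ∀ᵐ x ∂μ, Tendsto (fun n => cesaro T (n + 1) f x) atTop (𝓝 (Pf x)) :=
    tendstoAU_ae15 hP
  have hPfaem : AEMeasurable Pf μ :=
    aemeasurable_of_tendsto_metrizable_ae atTop
      (fun n => (cesaro_meas15 hmeasT hf (n + 1)).aemeasurable) haet
  rw [ENNReal.tendsto_atTop_zero]
  intro ε₀ hε₀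
  -- reduce to a finite positive real target
  set εm : ℝ≥0∞ := min ε₀ 1 with hεmdef
  have hεmne : εm ≠ ⊤ := (lt_of_le_of_lt (min_le_right _ _) ENNReal.one_lt_top).ne
  have hεm0 : εm ≠ 0 := (lt_min hε₀ one_pos).ne'
  set r : ℝ := εm.toReal with hrdef
  have hr : 0 < r := ENNReal.toReal_pos hεm0 hεmne
  -- truncation of `a'`
  obtain ⟨K, hK0, hKtr⟩ := trunc_small15 ha'm ha'mem (δ := r / 6) (by positivity)
  set g'' : Ω → ℝ := fun x => if K < |a' x| then a' x else 0 with hg''def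
  set g' : Ω → ℝ := fun x => if K < |a' x| then 0 else a' x with hg'def
  have hsum : a' = g' + g'' := by
    funext x
    by_cases hx : K < |a' x| <;> simp [hg'def, hg''def, hx]
  have hmeasset : MeasurableSet {x | K < |a' x|} := measurableSet_lt measurable_const ha'm.abs
  have hg'm : Measurable g' := Measurable.ite hmeasset measurable_const ha'm
  have hg''m : Measurable g'' := Measurable.ite hmeasset ha'm measurable_const
  have hg'bd : ∀ x, ‖g' x‖ ≤ K := by
    intro x
    by_cases hx : K < |a' x|
    · simp [hg'def, hx, hK0.le]
    · simp only [hg'def, hx, if_false]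
      rw [Real.norm_eq_abs]
      exact le_of_not_gt hx
  have hg'top : eLpNorm g' ⊤ μ ≤ ENNReal.ofReal K := by
    rw [eLpNorm_exponent_top]
    exact eLpNormEssSup_le_of_ae_bound (Filter.Eventually.of_forall hg'bd)
  have hg'mem : MemLp g' ⊤ μ :=
    ⟨hg'm.aestronglyMeasurable, lt_of_le_of_lt hg'top ENNReal.ofReal_lt_top⟩
  have hg''1 : eLpNorm g'' 1 μ ≤ ENNReal.ofReal (r / 6) := hKtr
  have hg''mem : MemLp g'' 1 μ :=
    ⟨hg''m.aestronglyMeasurable, lt_of_le_of_lt hg''1 ENNReal.ofReal_lt_top⟩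
  have hfdecomp : f = g' + g'' + h := by
    rw [← hsum, ha'def, sub_add_cancel]
  -- bounds on the averages
  have hMg' : ∀ n, eLpNorm (cesaro T (n + 1) g') ⊤ μ ≤ ENNReal.ofReal K := fun n =>
    (cesaro_eLpNorm_le15 le_top hmeasT hg'm (iter_Linf15 hmeasT hLinfc hg'm hg'mem) n).trans
      hg'top
  have hMh : ∀ n, eLpNorm (cesaro T (n + 1) h) ⊤ μ ≤ ENNReal.ofReal Cr := fun n =>
    (cesaro_eLpNorm_le15 le_top hmeasT hhm (iter_Linf15 hmeasT hLinfc hhm hhmem) n).trans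
      hhtop
  have hMg'' : ∀ n, eLpNorm (cesaro T (n + 1) g'') 1 μ ≤ ENNReal.ofReal (r / 6) := fun n =>
    (cesaro_eLpNorm_le15 le_rfl hmeasT hg''m (iter_L115 hmeasT hL1c hg''m hg''mem) n).trans
      hg''1
  -- choose the almost-uniform set
  set ε₁ : ℝ := r / (4 * (K + Cr + 1)) with hε₁def
  have hε₁ : 0 < ε₁ := by positivity
  obtain ⟨E, hEm, hEμ, hEt⟩ := hP ε₁ hε₁
  set J : ℝ≥0∞ := ENNReal.ofReal K * ENNReal.ofReal ε₁ + ENNReal.ofReal (r / 6) +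
      ENNReal.ofReal Cr * ENNReal.ofReal ε₁ with hJdef
  -- uniform bound of the integrals of the averages over `Eᶜ`
  have hIntBound : ∀ n, ∫⁻ x in Eᶜ, (‖cesaro T (n + 1) f x‖₊ : ℝ≥0∞) ∂μ ≤ J := by
    intro n
    have hsplitn : cesaro T (n + 1) f =
        cesaro T (n + 1) g' + cesaro T (n + 1) g'' + cesaro T (n + 1) h := by
      rw [hfdecomp, cesaro_add15 hadd, cesaro_add15 hadd]
    calc ∫⁻ x in Eᶜ, (‖cesaro T (n + 1) f x‖₊ : ℝ≥0∞) ∂μ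
        ≤ ∫⁻ x in Eᶜ, ((‖cesaro T (n + 1) g' x‖₊ : ℝ≥0∞) +
            (‖cesaro T (n + 1) g'' x‖₊ : ℝ≥0∞) + (‖cesaro T (n + 1) h x‖₊ : ℝ≥0∞)) ∂μ := by
          refine lintegral_mono fun x => ?_
          rw [hsplitn]
          calc (‖(cesaro T (n + 1) g' + cesaro T (n + 1) g'' + cesaro T (n + 1) h) x‖₊ :
              ℝ≥0∞)
              ≤ ((‖cesaro T (n + 1) g' x‖₊ + ‖cesaro T (n + 1) g'' x‖₊ +
                  ‖cesaro T (n + 1) h x‖₊ : ℝ≥0) : ℝ≥0∞) := by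
                refine ENNReal.coe_le_coe.2 ?_
                exact (nnnorm_add_le _ _).trans (add_le_add (nnnorm_add_le _ _) le_rfl)
            _ = _ := by push_cast; ring
      _ = (∫⁻ x in Eᶜ, (‖cesaro T (n + 1) g' x‖₊ : ℝ≥0∞) ∂μ) +
            (∫⁻ x in Eᶜ, (‖cesaro T (n + 1) g'' x‖₊ : ℝ≥0∞) ∂μ) +
            (∫⁻ x in Eᶜ, (‖cesaro T (n + 1) h x‖₊ : ℝ≥0∞) ∂μ) := by
          rw [lintegral_add_right _ (cesaro_meas15 hmeasT hhm (n + 1)).nnnorm.coe_nnreal_ennreal,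
            lintegral_add_right _ (cesaro_meas15 hmeasT hg''m (n + 1)).nnnorm.coe_nnreal_ennreal]
      _ ≤ J := by
          refine add_le_add (add_le_add ?_ ?_) ?_
          · exact (setLintegral_top_bound15 (hMg' n)).trans
              (mul_le_mul_right hEμ _)
          · refine (setLIntegral_le_lintegral _ _).trans ?_
            simp only [← enorm_eq_nnnorm]; rw [← eLpNorm_one_eq_lintegral_enorm]
            exact hMg'' n
          · exact (setLintegral_top_bound15 (hMh n)).trans
              (mul_le_mul_right hEμ _)
  -- Fatou: the limit satisfies the same bound
  have hPfbound : ∫⁻ x in Eᶜ, (‖Pf x‖₊ : ℝ≥0∞) ∂μ ≤ J := by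
    have hliminf : ∀ᵐ x ∂(μ.restrict Eᶜ),
        (‖Pf x‖₊ : ℝ≥0∞) = liminf (fun n => (‖cesaro T (n + 1) f x‖₊ : ℝ≥0∞)) atTop := by
      refine ae_restrict_of_ae ?_
      filter_upwards [haet] with x hx
      exact ((ENNReal.tendsto_coe.2 hx.nnnorm).liminf_eq).symm
    rw [lintegral_congr_ae hliminf]
    calc ∫⁻ x in Eᶜ, liminf (fun n => (‖cesaro T (n + 1) f x‖₊ : ℝ≥0∞)) atTop ∂μ
        ≤ liminf (fun n => ∫⁻ x in Eᶜ, (‖cesaro T (n + 1) f x‖₊ : ℝ≥0∞) ∂μ) atTop :=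
          lintegral_liminf_le fun n => (cesaro_meas15 hmeasT hf (n + 1)).enorm
      _ ≤ liminf (fun _ : ℕ => J) atTop :=
          Filter.liminf_le_liminf (Filter.Eventually.of_forall hIntBound)
      _ = J := Filter.liminf_const _
  -- find N from almost uniform convergence
  obtain ⟨N, hN⟩ := ENNReal.tendsto_atTop_zero.1 hEt (ENNReal.ofReal (r / 6))
    (ENNReal.ofReal_pos.2 (by positivity))
  refine ⟨N, fun n hn => ?_⟩
  set u : Ω → ℝ := cesaro T (n + 1) f - Pf with hudef
  have huaem : AEStronglyMeasurable u μ :=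
    ((cesaro_meas15 hmeasT hf (n + 1)).aemeasurable.sub hPfaem).aestronglyMeasurable
  -- the `L¹` part
  have huint : ∫⁻ x in Eᶜ, (‖u x‖₊ : ℝ≥0∞) ∂μ ≤ J + J := by
    calc ∫⁻ x in Eᶜ, (‖u x‖₊ : ℝ≥0∞) ∂μ
        ≤ ∫⁻ x in Eᶜ, ((‖cesaro T (n + 1) f x‖₊ : ℝ≥0∞) + (‖Pf x‖₊ : ℝ≥0∞)) ∂μ := by
          refine lintegral_mono fun x => ?_
          calc (‖u x‖₊ : ℝ≥0∞) ≤ ((‖cesaro T (n + 1) f x‖₊ + ‖Pf x‖₊ : ℝ≥0) : ℝ≥0∞) :=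
                ENNReal.coe_le_coe.2 (nnnorm_sub_le _ _)
            _ = _ := by push_cast; ring
      _ = (∫⁻ x in Eᶜ, (‖cesaro T (n + 1) f x‖₊ : ℝ≥0∞) ∂μ) +
            (∫⁻ x in Eᶜ, (‖Pf x‖₊ : ℝ≥0∞) ∂μ) :=
          lintegral_add_left (cesaro_meas15 hmeasT hf (n + 1)).enorm _
      _ ≤ J + J := add_le_add (hIntBound n) hPfbound
  have hJfin : J ≠ ⊤ := by
    simp only [hJdef]
    finiteness
  have hu1 : MemLp (Eᶜ.indicator u) 1 μ := by
    refine ⟨huaem.indicator hEm.compl, ?_⟩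
    rw [eLpNorm_indicator_eq_eLpNorm_restrict hEm.compl, eLpNorm_one_eq_lintegral_enorm]
    exact lt_of_le_of_lt huint (by
      exact lt_of_le_of_ne le_top (by simpa using ENNReal.add_ne_top.2 ⟨hJfin, hJfin⟩))
  have hu1norm : eLpNorm (Eᶜ.indicator u) 1 μ ≤ J + J := by
    rw [eLpNorm_indicator_eq_eLpNorm_restrict hEm.compl, eLpNorm_one_eq_lintegral_enorm]
    exact huint
  -- the `L^∞` part
  have hu2top : eLpNorm (E.indicator u) ⊤ μ ≤ ENNReal.ofReal (r / 6) := by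
    have hneg : E.indicator u = -(E.indicator (Pf - cesaro T (n + 1) f)) := by
      funext x
      by_cases hx : x ∈ E <;>
        simp [Set.indicator_of_mem, Set.indicator_of_notMem, hx, hudef]
    rw [hneg, eLpNorm_neg]
    simpa using hN n hn
  have hu2 : MemLp (E.indicator u) ⊤ μ :=
    ⟨huaem.indicator hEm, lt_of_le_of_lt hu2top ENNReal.ofReal_lt_top⟩
  have hdecomp : u = Eᶜ.indicator u + E.indicator u := by
    have h0 := Set.indicator_self_add_compl Eᶜ u
    rw [compl_compl] at h0
    exact h0.symm
  -- the key arithmetic estimate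
  have hkey : (K + Cr) * ε₁ ≤ r / 4 := by
    rw [hε₁def, mul_comm, div_mul_eq_mul_div,
      div_le_div_iff₀ (by positivity) (by norm_num)]
    nlinarith [hr.le]
  have hJle : J ≤ ENNReal.ofReal ((K + Cr) * ε₁ + r / 6) := by
    rw [hJdef, ← ENNReal.ofReal_mul hK0.le, ← ENNReal.ofReal_mul hCr0,
      ← ENNReal.ofReal_add (by positivity) (by positivity),
      ← ENNReal.ofReal_add (by positivity) (by positivity)]
    exact ENNReal.ofReal_le_ofReal (by nlinarith)
  calc normL1PlusLinf μ (cesaro T (n + 1) f - Pf)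
      ≤ eLpNorm (Eᶜ.indicator u) 1 μ + eLpNorm (E.indicator u) ⊤ μ :=
        normL1PlusLinf_le15 hu1 hu2 hdecomp
    _ ≤ (J + J) + ENNReal.ofReal (r / 6) := add_le_add hu1norm hu2top
    _ ≤ (ENNReal.ofReal ((K + Cr) * ε₁ + r / 6) + ENNReal.ofReal ((K + Cr) * ε₁ + r / 6)) +
          ENNReal.ofReal (r / 6) := add_le_add (add_le_add hJle hJle) le_rfl
    _ = ENNReal.ofReal ((((K + Cr) * ε₁ + r / 6) + ((K + Cr) * ε₁ + r / 6)) + r / 6) := by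
        rw [← ENNReal.ofReal_add (by positivity) (by positivity),
          ← ENNReal.ofReal_add (by positivity) (by positivity)]
    _ ≤ ENNReal.ofReal r := ENNReal.ofReal_le_ofReal (by nlinarith)
    _ = εm := by rw [hrdef, ENNReal.ofReal_toReal hεmne]
    _ ≤ ε₀ := min_le_left _ _
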